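/- The ratio of consecutive Bell numbers tends to infinity: lim_{n→∞} B_n / B_{n-1} = ∞. Equivalently, for every real c > 0 there exists N such that for all n ≥ N, B_n > c · B_{n-1}. -/

import Mathlib

/-- A set partition of `Fin n`, modelled as a finite set of blocks. -/
def IsSetPartition {n : ℕ} (P : Finset (Finset (Fin n))) : Prop :=
  (∀ b ∈ P, b.Nonempty) ∧ (∀ b ∈ P, ∀ c ∈ P, b ≠ c → Disjoint b c) ∧
    P.sup id = Finset.univ

/-- The `n`-th Bell number: the number of set partitions of an `n`-element set. -/
noncomputable def bell (n : ℕ) : ℕ :=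
  Set.ncard {P : Finset (Finset (Fin n)) | IsSetPartition P}

/-- The number of singleton-free set partitions of an `n`-element set. -/
noncomputable def bellT (n : ℕ) : ℕ :=
  Set.ncard {P : Finset (Finset (Fin n)) | IsSetPartition P ∧ ∀ b ∈ P, 2 ≤ b.card}

open Finset Classical in
noncomputable def bellF (n : ℕ) : Finset (Finset (Finset (Fin n))) :=
  Finset.univ.filter IsSetPartition

open Classical in
lemma mem_bellF {n : ℕ} {P : Finset (Finset (Fin n))} : P ∈ bellF n ↔ IsSetPartition P := by
  simp [bellF]

lemma bell_eq (n : ℕ) : bell n = (bellF n).card := by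
  classical
  rw [bell, ← Set.ncard_coe_finset]
  congr 1
  ext P
  simp [mem_bellF]

open Classical in
noncomputable def blk {n : ℕ} (P : Finset (Finset (Fin n))) (x : Fin n) : Finset (Fin n) :=
  (P.filter (fun b => x ∈ b)).sup id

section blk
variable {n : ℕ} {P : Finset (Finset (Fin n))}

lemma exists_block (hP : IsSetPartition P) (x : Fin n) : ∃ b ∈ P, x ∈ b := by
  have hx : x ∈ P.sup id := by rw [hP.2.2]; exact Finset.mem_univ x
  simpa [Finset.mem_sup] using hx

open Classical in
lemma filter_eq_blk (hP : IsSetPartition P) (x : Fin n) :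
    ∃ b ∈ P, x ∈ b ∧ (P.filter (fun b => x ∈ b)) = {b} := by
  obtain ⟨b, hbP, hxb⟩ := exists_block hP x
  refine ⟨b, hbP, hxb, ?_⟩
  ext c
  simp only [Finset.mem_filter, Finset.mem_singleton]
  constructor
  · rintro ⟨hcP, hxc⟩
    by_contra hne
    exact (Finset.disjoint_left.1 (hP.2.1 c hcP b hbP hne)) hxc hxb
  · rintro rfl; exact ⟨hbP, hxb⟩

lemma blk_mem (hP : IsSetPartition P) (x : Fin n) : blk P x ∈ P := by
  obtain ⟨b, hbP, _, hb⟩ := filter_eq_blk hP x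
  rw [blk, hb]; simpa using hbP

lemma mem_blk (hP : IsSetPartition P) (x : Fin n) : x ∈ blk P x := by
  obtain ⟨b, _, hxb, hb⟩ := filter_eq_blk hP x
  rw [blk, hb]; simpa using hxb

lemma eq_blk (hP : IsSetPartition P) (x : Fin n) {b : Finset (Fin n)}
    (hb : b ∈ P) (hxb : x ∈ b) : b = blk P x := by
  classical
  obtain ⟨c, _, _, hc⟩ := filter_eq_blk hP x
  have : b ∈ P.filter (fun b => x ∈ b) := Finset.mem_filter.2 ⟨hb, hxb⟩
  rw [hc, Finset.mem_singleton] at this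
  subst this
  rw [blk, hc]; simp

lemma blk_eq_iff (hP : IsSetPartition P) {x y : Fin n} :
    y ∈ blk P x ↔ blk P y = blk P x := by
  constructor
  · intro hy
    exact (eq_blk hP y (blk_mem hP x) hy).symm
  · intro h
    rw [← h]; exact mem_blk hP y

-- a partition equals the image of its blk function
lemma image_blk (hP : IsSetPartition P) : Finset.univ.image (blk P) = P := by
  classical
  ext b
  simp only [Finset.mem_image, Finset.mem_univ, true_and]
  constructor
  · rintro ⟨x, rfl⟩; exact blk_mem hP x
  · intro hb
    obtain ⟨x, hx⟩ := hP.1 b hb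
    exact ⟨x, (eq_blk hP x hb hx).symm⟩

-- fibers of a function form a partition
open Classical in
noncomputable def fibers {n : ℕ} {α : Type*} (F : Fin n → α) : Finset (Finset (Fin n)) :=
  Finset.univ.image (fun x => Finset.univ.filter (fun y => F y = F x))

open Classical in
lemma isSetPartition_fibers {n : ℕ} {α : Type*} (F : Fin n → α) :
    IsSetPartition (fibers F) := by
  refine ⟨?_, ?_, ?_⟩
  · intro b hb
    simp only [fibers, Finset.mem_image, Finset.mem_univ, true_and] at hb
    obtain ⟨x, rfl⟩ := hb
    exact ⟨x, by simp⟩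
  · intro b hb c hc hne
    simp only [fibers, Finset.mem_image, Finset.mem_univ, true_and] at hb hc
    obtain ⟨x, rfl⟩ := hb
    obtain ⟨y, rfl⟩ := hc
    rw [Finset.disjoint_left]
    intro a ha hac
    simp only [Finset.mem_filter, Finset.mem_univ, true_and] at ha hac
    apply hne
    ext z
    simp only [Finset.mem_filter, Finset.mem_univ, true_and]
    rw [← ha, ← hac]
  · apply Finset.eq_univ_iff_forall.2
    intro x
    rw [Finset.mem_sup]
    refine ⟨Finset.univ.filter (fun y => F y = F x), ?_, by simp⟩
    simp only [fibers, Finset.mem_image, Finset.mem_univ, true_and]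
    exact ⟨x, rfl⟩

open Classical in
lemma fibers_blk (hP : IsSetPartition P) : fibers (blk P) = P := by
  conv_rhs => rw [← image_blk hP]
  rw [fibers]
  apply Finset.image_congr
  intro x _
  ext y
  simp only [Finset.mem_filter, Finset.mem_univ, true_and, id]
  exact (blk_eq_iff hP).symm

end blk

open Classical in
lemma blk_fibers {n : ℕ} {α : Type*} (F : Fin n → α) (x : Fin n) :
    blk (fibers F) x = Finset.univ.filter (fun y => F y = F x) := by
  refine (eq_blk (isSetPartition_fibers F) x ?_ (by simp)).symm
  simp only [fibers, Finset.mem_image, Finset.mem_univ, true_and]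
  exact ⟨x, rfl⟩

/-- Lemma C: `t^(ℓ-t) ≤ bell ℓ` for `1 ≤ t ≤ ℓ`. -/
lemma pow_le_bell {ℓ t : ℕ} (ht : 1 ≤ t) (htl : t ≤ ℓ) : t ^ (ℓ - t) ≤ bell ℓ := by
  classical
  rw [bell_eq]
  set Φ : (Fin (ℓ - t) → Fin t) → (Fin ℓ → Fin t) := fun f x =>
    if h : (x : ℕ) < t then ⟨x, h⟩ else f ⟨(x : ℕ) - t, by omega⟩ with hΦ
  have key : ∀ (f : Fin (ℓ - t) → Fin t) (j : Fin (ℓ - t)),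
      Φ f ⟨t + j, by omega⟩ = f j := by
    intro f j
    simp only [hΦ]
    rw [dif_neg (by omega)]
    congr 1
    apply Fin.ext
    show t + (j:ℕ) - t = (j:ℕ)
    omega
  have keylt : ∀ (f : Fin (ℓ - t) → Fin t) (v : Fin t),
      Φ f ⟨(v : ℕ), by omega⟩ = v := by
    intro f v
    simp only [hΦ]
    rw [dif_pos (by omega)]
  calc t ^ (ℓ - t) = (Finset.univ : Finset (Fin (ℓ - t) → Fin t)).card := by
        simp [Finset.card_univ]
    _ ≤ (bellF ℓ).card := by
        apply Finset.card_le_card_of_injOn (fun f => fibers (Φ f))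
        · intro f _
          exact mem_bellF.2 (isSetPartition_fibers (Φ f))
        · intro f _ g _ h
          have h' : fibers (Φ f) = fibers (Φ g) := h
          funext j
          have hx : (t + (j : ℕ)) < ℓ := by omega
          set x : Fin ℓ := ⟨t + j, hx⟩ with hxdef
          set y : Fin ℓ := ⟨((f j : ℕ)), by omega⟩ with hydef
          have hy : y ∈ blk (fibers (Φ f)) x := by
            rw [blk_fibers]
            simp only [Finset.mem_filter, Finset.mem_univ, true_and]
            rw [keylt f (f j), key f j]
          have hy2 : y ∈ blk (fibers (Φ g)) x := by rw [← h']; exact hy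
          rw [blk_fibers] at hy2
          simp only [Finset.mem_filter, Finset.mem_univ, true_and] at hy2
          rw [keylt g (f j), key g j] at hy2
          exact hy2

open Classical in
/-- rank of the block of x -/
noncomputable def gmap {n : ℕ} (P : Finset (Finset (Fin n))) (x : Fin n) : ℕ :=
  (P.filter (fun d => d.min < (blk P x).min)).card

lemma min_inj {n : ℕ} {P : Finset (Finset (Fin n))} (hP : IsSetPartition P)
    {b c : Finset (Fin n)} (hb : b ∈ P) (hc : c ∈ P) (h : b.min = c.min) : b = c := by
  have hbne : b.Nonempty := hP.1 b hb
  have hcne : c.Nonempty := hP.1 c hc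
  by_contra hne
  have hd := hP.2.1 b hb c hc hne
  have h1 : (↑(b.min' hbne) : WithTop (Fin n)) = ↑(c.min' hcne) := by
    rw [Finset.coe_min', Finset.coe_min', h]
  have h2 : b.min' hbne = c.min' hcne := by exact_mod_cast h1
  exact Finset.disjoint_left.1 hd (Finset.min'_mem b hbne) (h2 ▸ Finset.min'_mem c hcne)

lemma gmap_eq_iff {n : ℕ} {P : Finset (Finset (Fin n))} (hP : IsSetPartition P)
    (x y : Fin n) : gmap P y = gmap P x ↔ blk P y = blk P x := by
  classical
  constructor
  · intro h
    set b := blk P y with hb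
    set c := blk P x with hc
    have hbP : b ∈ P := blk_mem hP y
    have hcP : c ∈ P := blk_mem hP x
    -- from equal rank counts, mins are equal
    rcases lt_trichotomy b.min c.min with hlt | heq | hgt
    · exfalso
      have hsub : P.filter (fun d => d.min < b.min) ⊆ P.filter (fun d => d.min < c.min) := by
        intro d hd
        simp only [Finset.mem_filter] at hd ⊢
        exact ⟨hd.1, lt_trans hd.2 hlt⟩
      have hbmem : b ∈ P.filter (fun d => d.min < c.min) := Finset.mem_filter.2 ⟨hbP, hlt⟩
      have hbnot : b ∉ P.filter (fun d => d.min < b.min) := by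
        simp only [Finset.mem_filter]
        rintro ⟨-, hlt'⟩
        exact lt_irrefl _ hlt'
      have := Finset.card_lt_card (Finset.ssubset_iff_of_subset hsub |>.2 ⟨b, hbmem, hbnot⟩)
      rw [gmap, gmap, ← hb, ← hc] at h
      omega
    · exact min_inj hP hbP hcP heq
    · exfalso
      have hsub : P.filter (fun d => d.min < c.min) ⊆ P.filter (fun d => d.min < b.min) := by
        intro d hd
        simp only [Finset.mem_filter] at hd ⊢
        exact ⟨hd.1, lt_trans hd.2 hgt⟩
      have hcmem : c ∈ P.filter (fun d => d.min < b.min) := Finset.mem_filter.2 ⟨hcP, hgt⟩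
      have hcnot : c ∉ P.filter (fun d => d.min < c.min) := by
        simp only [Finset.mem_filter]
        rintro ⟨-, hlt'⟩
        exact lt_irrefl _ hlt'
      have := Finset.card_lt_card (Finset.ssubset_iff_of_subset hsub |>.2 ⟨c, hcmem, hcnot⟩)
      rw [gmap, gmap, ← hb, ← hc] at h
      omega
  · intro h
    rw [gmap, gmap, h]

lemma gmap_lt {n : ℕ} {P : Finset (Finset (Fin n))} (hP : IsSetPartition P)
    (x : Fin n) : gmap P x < P.card := by
  classical
  apply Finset.card_lt_card
  rw [Finset.ssubset_iff_of_subset (Finset.filter_subset _ _)]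
  refine ⟨blk P x, blk_mem hP x, ?_⟩
  simp only [Finset.mem_filter]
  rintro ⟨-, hlt⟩
  exact lt_irrefl _ hlt

lemma fibers_gmap {n : ℕ} {P : Finset (Finset (Fin n))} (hP : IsSetPartition P) :
    fibers (gmap P) = P := by
  classical
  conv_rhs => rw [← fibers_blk hP]
  rw [fibers, fibers]
  apply Finset.image_congr
  intro x _
  ext y
  simp only [Finset.mem_filter, Finset.mem_univ, true_and]
  exact gmap_eq_iff hP x y

/-- Lemma B: partitions with fewer than `m` blocks number at most `m ^ ℓ`. -/
lemma card_few_blocks {ℓ m : ℕ} (hm : 1 ≤ m) :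
    ((bellF ℓ).filter (fun P => P.card < m)).card ≤ m ^ ℓ := by
  classical
  have : ((Finset.univ : Finset (Fin ℓ → Fin m))).card = m ^ ℓ := by
    simp [Finset.card_univ]
  rw [← this]
  apply Finset.card_le_card_of_injOn
    (fun P => fun x => (⟨min (gmap P x) (m-1), by omega⟩ : Fin m))
  · intro P _; exact Finset.mem_univ _
  · intro P hPm Q hQm h
    simp only [Finset.coe_filter, Set.mem_setOf_eq, mem_bellF] at hPm hQm
    obtain ⟨hP, hPc⟩ := hPm
    obtain ⟨hQ, hQc⟩ := hQm
    have hg : gmap P = gmap Q := by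
      funext x
      have h1 : gmap P x < m := lt_of_lt_of_le (gmap_lt hP x) (le_of_lt hPc)
      have h2 : gmap Q x < m := lt_of_lt_of_le (gmap_lt hQ x) (le_of_lt hQc)
      have := congrFun h x
      simp only [Fin.mk.injEq] at this
      omega
    rw [← fibers_gmap hP, ← fibers_gmap hQ, hg]
section LemmaA
variable {ℓ : ℕ}

/-- lift a block of `Fin ℓ` into `Fin (ℓ+1)` -/
def lift (b : Finset (Fin ℓ)) : Finset (Fin (ℓ + 1)) := b.map Fin.castSuccEmb

open Classical in
noncomputable def down (b : Finset (Fin (ℓ + 1))) : Finset (Fin ℓ) :=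
  Finset.univ.filter (fun z => z.castSucc ∈ b)

lemma last_not_mem_lift (b : Finset (Fin ℓ)) : Fin.last ℓ ∉ lift b := by
  rw [lift]
  intro h
  obtain ⟨z, -, hz⟩ := Finset.mem_map.1 h
  exact (Fin.castSucc_lt_last z).ne hz

lemma mem_lift {b : Finset (Fin ℓ)} {z : Fin ℓ} : z.castSucc ∈ lift b ↔ z ∈ b :=
  Finset.mem_map' _

lemma lift_injective : Function.Injective (lift (ℓ := ℓ)) :=
  fun _ _ h => Finset.map_injective _ h

lemma down_lift (b : Finset (Fin ℓ)) : down (lift b) = b := by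
  ext z
  simp [down, mem_lift]

lemma down_insert_last (b : Finset (Fin ℓ)) :
    down (insert (Fin.last ℓ) (lift b)) = b := by
  ext z
  simp only [down, Finset.mem_filter, Finset.mem_univ, true_and, Finset.mem_insert]
  constructor
  · rintro (h | h)
    · exact absurd h (Fin.castSucc_lt_last z).ne
    · exact mem_lift.1 h
  · intro h; exact Or.inr (mem_lift.2 h)

lemma down_singleton_last : down ({Fin.last ℓ} : Finset (Fin (ℓ + 1))) = ∅ := by
  ext z
  simp only [down, Finset.mem_filter, Finset.mem_univ, true_and, Finset.mem_singleton,
    Finset.notMem_empty, iff_false]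
  exact (Fin.castSucc_lt_last z).ne

lemma lift_nonempty {b : Finset (Fin ℓ)} (h : b.Nonempty) : (lift b).Nonempty :=
  Finset.Nonempty.map h

lemma disjoint_lift {b c : Finset (Fin ℓ)} (h : Disjoint b c) :
    Disjoint (lift b) (lift c) := (Finset.disjoint_map _).2 h

open Classical in
/-- the extension map -/
noncomputable def ext1 (P : Finset (Finset (Fin ℓ))) (o : Option (Fin ℓ)) :
    Finset (Finset (Fin (ℓ + 1))) :=
  match o with
  | none => insert {Fin.last ℓ} (P.image lift)
  | some x => P.image (fun b => if x ∈ b then insert (Fin.last ℓ) (lift b) else lift b)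

open Classical in
noncomputable def restrict (R : Finset (Finset (Fin (ℓ + 1)))) : Finset (Finset (Fin ℓ)) :=
  (R.image down).erase ∅

lemma empty_not_mem {n : ℕ} {P : Finset (Finset (Fin n))} (hP : IsSetPartition P) :
    ∅ ∉ P := fun h => by
  obtain ⟨x, hx⟩ := hP.1 ∅ h
  exact absurd hx (Finset.notMem_empty x)

open Classical in
lemma restrict_ext1 {P : Finset (Finset (Fin ℓ))} (hP : IsSetPartition P)
    (o : Option (Fin ℓ)) : restrict (ext1 P o) = P := by
  have hemp := empty_not_mem hP
  cases o with
  | none =>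
    rw [restrict, ext1, Finset.image_insert, down_singleton_last, Finset.image_image]
    have : P.image (down ∘ lift) = P := by
      rw [show down ∘ lift = id from funext down_lift, Finset.image_id]
    rw [this]
    rw [Finset.erase_insert_eq_erase, Finset.erase_eq_of_notMem hemp]
  | some x =>
    rw [restrict, ext1, Finset.image_image]
    have : P.image (down ∘ (fun b => if x ∈ b then insert (Fin.last ℓ) (lift b) else lift b)) = P := by
      have : (down ∘ (fun b => if x ∈ b then insert (Fin.last ℓ) (lift b) else lift b)) = id := by
        funext b
        simp only [Function.comp_apply, id]
        by_cases hx : x ∈ b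
        · rw [if_pos hx, down_insert_last]
        · rw [if_neg hx, down_lift]
      rw [this, Finset.image_id]
    rw [this, Finset.erase_eq_of_notMem hemp]

open Classical in
lemma isSetPartition_ext1 {P : Finset (Finset (Fin ℓ))} (hP : IsSetPartition P)
    (o : Option (Fin ℓ)) : IsSetPartition (ext1 P o) := by
  cases o with
  | none =>
    refine ⟨?_, ?_, ?_⟩
    · intro b hb
      rw [ext1, Finset.mem_insert] at hb
      rcases hb with rfl | hb
      · exact ⟨Fin.last ℓ, Finset.mem_singleton_self _⟩
      · obtain ⟨c, hc, rfl⟩ := Finset.mem_image.1 hb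
        exact lift_nonempty (hP.1 c hc)
    · intro b hb c hc hne
      rw [ext1, Finset.mem_insert] at hb hc
      rcases hb with rfl | hb <;> rcases hc with rfl | hc
      · exact absurd rfl hne
      · obtain ⟨c', hc', rfl⟩ := Finset.mem_image.1 hc
        rw [Finset.disjoint_left]
        intro a ha
        rw [Finset.mem_singleton] at ha
        subst ha
        exact last_not_mem_lift c'
      · obtain ⟨b', hb', rfl⟩ := Finset.mem_image.1 hb
        rw [Finset.disjoint_right]
        intro a ha
        rw [Finset.mem_singleton] at ha
        subst ha
        exact last_not_mem_lift b'
      · obtain ⟨b', hb', rfl⟩ := Finset.mem_image.1 hb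
        obtain ⟨c', hc', rfl⟩ := Finset.mem_image.1 hc
        exact disjoint_lift (hP.2.1 b' hb' c' hc' (fun h => hne (by rw [h])))
    · apply Finset.eq_univ_iff_forall.2
      intro y
      rw [Finset.mem_sup]
      by_cases hy : y = Fin.last ℓ
      · exact ⟨{Fin.last ℓ}, by rw [ext1]; exact Finset.mem_insert_self _ _,
          by rw [hy, id]; exact Finset.mem_singleton_self _⟩
      · obtain ⟨z, rfl⟩ := Fin.exists_castSucc_eq.2 hy
        refine ⟨lift (blk P z), ?_, ?_⟩
        · rw [ext1]
          exact Finset.mem_insert_of_mem (Finset.mem_image_of_mem _ (blk_mem hP z))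
        · rw [id]; exact mem_lift.2 (mem_blk hP z)
  | some x =>
    refine ⟨?_, ?_, ?_⟩
    · intro b hb
      obtain ⟨c, hc, rfl⟩ := Finset.mem_image.1 hb
      by_cases hx : x ∈ c
      · rw [if_pos hx]; exact ⟨Fin.last ℓ, Finset.mem_insert_self _ _⟩
      · rw [if_neg hx]; exact lift_nonempty (hP.1 c hc)
    · intro b hb c hc hne
      obtain ⟨b', hb', rfl⟩ := Finset.mem_image.1 hb
      obtain ⟨c', hc', rfl⟩ := Finset.mem_image.1 hc
      have hne' : b' ≠ c' := fun h => hne (by rw [h])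
      have hdisj := hP.2.1 b' hb' c' hc' hne'
      have hld := disjoint_lift hdisj
      by_cases hxb : x ∈ b' <;> by_cases hxc : x ∈ c'
      · exact absurd hxc (Finset.disjoint_left.1 hdisj hxb)
      · rw [if_pos hxb, if_neg hxc]
        rw [Finset.disjoint_left]
        intro a ha
        rw [Finset.mem_insert] at ha
        rcases ha with rfl | ha
        · exact last_not_mem_lift c'
        · exact Finset.disjoint_left.1 hld ha
      · rw [if_neg hxb, if_pos hxc]
        rw [Finset.disjoint_right]
        intro a ha
        rw [Finset.mem_insert] at ha
        rcases ha with rfl | ha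
        · exact last_not_mem_lift b'
        · exact Finset.disjoint_right.1 hld ha
      · rw [if_neg hxb, if_neg hxc]; exact hld
    · apply Finset.eq_univ_iff_forall.2
      intro y
      rw [Finset.mem_sup]
      by_cases hy : y = Fin.last ℓ
      · refine ⟨if x ∈ blk P x then insert (Fin.last ℓ) (lift (blk P x)) else lift (blk P x),
          Finset.mem_image_of_mem _ (blk_mem hP x), ?_⟩
        rw [if_pos (mem_blk hP x), id, hy]
        exact Finset.mem_insert_self _ _
      · obtain ⟨z, rfl⟩ := Fin.exists_castSucc_eq.2 hy
        refine ⟨if x ∈ blk P z then insert (Fin.last ℓ) (lift (blk P z)) else lift (blk P z),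
          Finset.mem_image_of_mem _ (blk_mem hP z), ?_⟩
        by_cases hx : x ∈ blk P z
        · rw [if_pos hx, id]
          exact Finset.mem_insert_of_mem (mem_lift.2 (mem_blk hP z))
        · rw [if_neg hx, id]
          exact mem_lift.2 (mem_blk hP z)

end LemmaA
section LemmaA2
variable {ℓ : ℕ}

open Classical in
noncomputable def minset (P : Finset (Finset (Fin ℓ))) : Finset (Fin ℓ) :=
  Finset.univ.filter (fun x => ∀ y ∈ blk P x, x ≤ y)

open Classical in
lemma mem_minset {P : Finset (Finset (Fin ℓ))} {x : Fin ℓ} :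
    x ∈ minset P ↔ ∀ y ∈ blk P x, x ≤ y := by
  simp [minset]

lemma card_minset {P : Finset (Finset (Fin ℓ))} (hP : IsSetPartition P) :
    (minset P).card = P.card := by
  classical
  apply Finset.card_bij (fun x _ => blk P x)
  · intro x hx
    exact blk_mem hP x
  · intro x hx y hy h
    rw [mem_minset] at hx hy
    have h1 : x ≤ y := hx y (h ▸ mem_blk hP y)
    have h2 : y ≤ x := hy x (h.symm ▸ mem_blk hP x)
    exact le_antisymm h1 h2
  · intro b hb
    have hne := hP.1 b hb
    refine ⟨b.min' hne, ?_, ?_⟩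
    · rw [mem_minset]
      intro y hy
      rw [← eq_blk hP (b.min' hne) hb (Finset.min'_mem b hne)] at hy
      exact Finset.min'_le b y hy
    · exact (eq_blk hP (b.min' hne) hb (Finset.min'_mem b hne)).symm

open Classical in
lemma ext1_inj_o {P : Finset (Finset (Fin ℓ))} (hP : IsSetPartition P)
    {o o' : Option (Fin ℓ)}
    (ho : o = none ∨ ∃ x ∈ minset P, o = some x)
    (ho' : o' = none ∨ ∃ x ∈ minset P, o' = some x)
    (h : ext1 P o = ext1 P o') : o = o' := by
  -- key: whether {last} is a block, and if not, which block contains last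
  have hsome : ∀ (x : Fin ℓ), ({Fin.last ℓ} : Finset (Fin (ℓ+1))) ∉ ext1 P (some x) := by
    intro x hmem
    rw [ext1] at hmem
    obtain ⟨c, hc, hceq⟩ := Finset.mem_image.1 hmem
    by_cases hxc : x ∈ c
    · rw [if_pos hxc] at hceq
      have : x.castSucc ∈ insert (Fin.last ℓ) (lift c) :=
        Finset.mem_insert_of_mem (mem_lift.2 hxc)
      rw [hceq, Finset.mem_singleton] at this
      exact (Fin.castSucc_lt_last x).ne this
    · rw [if_neg hxc] at hceq
      have : Fin.last ℓ ∈ lift c := hceq ▸ Finset.mem_singleton_self _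
      exact last_not_mem_lift c this
  rcases ho with rfl | ⟨x, hx, rfl⟩ <;> rcases ho' with rfl | ⟨y, hy, rfl⟩
  · rfl
  · exfalso
    have : ({Fin.last ℓ} : Finset (Fin (ℓ+1))) ∈ ext1 P (none : Option (Fin ℓ)) := by
      rw [ext1]; exact Finset.mem_insert_self _ _
    rw [h] at this
    exact hsome y this
  · exfalso
    have : ({Fin.last ℓ} : Finset (Fin (ℓ+1))) ∈ ext1 P (none : Option (Fin ℓ)) := by
      rw [ext1]; exact Finset.mem_insert_self _ _
    rw [← h] at this
    exact hsome x this
  · congr 1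
    have hxblk : insert (Fin.last ℓ) (lift (blk P x)) ∈ ext1 P (some x) := by
      rw [ext1]
      exact Finset.mem_image.2 ⟨blk P x, blk_mem hP x, by rw [if_pos (mem_blk hP x)]⟩
    rw [h, ext1] at hxblk
    obtain ⟨c, hc, hceq⟩ := Finset.mem_image.1 hxblk
    by_cases hyc : y ∈ c
    · rw [if_pos hyc] at hceq
      -- insert last (lift c) = insert last (lift (blk P x)) so lift c = lift (blk P x)
      have hlc : lift c = lift (blk P x) := by
        have h1 := congrArg (fun s => Finset.erase s (Fin.last ℓ)) hceq
        simpa [Finset.erase_insert (last_not_mem_lift c),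
          Finset.erase_insert (last_not_mem_lift (blk P x))] using h1
      have hcblk : c = blk P x := lift_injective hlc
      subst hcblk
      -- y ∈ blk P x, x ∈ minset, y ∈ minset
      have hxy : x ≤ y := (mem_minset.1 hx) y hyc
      have hblkyx : blk P y = blk P x := (blk_eq_iff hP).1 hyc
      have hyx : y ≤ x := (mem_minset.1 hy) x (hblkyx.symm ▸ mem_blk hP x)
      exact le_antisymm hxy hyx
    · exfalso
      rw [if_neg hyc] at hceq
      have : Fin.last ℓ ∈ lift c := hceq ▸ Finset.mem_insert_self _ _
      exact last_not_mem_lift c this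

/-- Lemma A -/
lemma lemmaA (ℓ m : ℕ) :
    (m + 1) * ((bellF ℓ).filter (fun P => m ≤ P.card)).card ≤ (bellF (ℓ + 1)).card := by
  classical
  set S := (bellF ℓ).filter (fun P => m ≤ P.card) with hS
  set D : Finset (Finset (Finset (Fin ℓ)) × Option (Fin ℓ)) :=
    S.biUnion (fun P => {P} ×ˢ (insert none ((minset P).image some))) with hD
  have hcardD : (m + 1) * S.card ≤ D.card := by
    rw [hD, Finset.card_biUnion]
    · calc (m + 1) * S.card = ∑ _u ∈ S, (m + 1) := by
            rw [Finset.sum_const, smul_eq_mul, mul_comm]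
        _ ≤ ∑ u ∈ S, ({u} ×ˢ insert none ((minset u).image some)).card := by
            apply Finset.sum_le_sum
            intro P hPS
            have hP : IsSetPartition P := mem_bellF.1 (Finset.mem_filter.1 hPS).1
            have hm : m ≤ P.card := (Finset.mem_filter.1 hPS).2
            rw [Finset.card_product, Finset.card_singleton, one_mul,
              Finset.card_insert_of_notMem (by simp),
              Finset.card_image_of_injective _ (Option.some_injective _), card_minset hP]
            omega
    · intro P hP Q hQ hne
      simp only [Finset.disjoint_left]
      rintro ⟨a, o⟩ ha hb
      rw [Finset.mem_product] at ha hb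
      exact hne ((Finset.mem_singleton.1 ha.1).symm.trans (Finset.mem_singleton.1 hb.1))
  have hinj : D.card ≤ (bellF (ℓ + 1)).card := by
    apply Finset.card_le_card_of_injOn (fun pr => ext1 pr.1 pr.2)
    · rintro ⟨P, o⟩ hpr
      simp only [hD, Finset.mem_coe, Finset.mem_biUnion] at hpr
      obtain ⟨Q, hQ, hmem⟩ := hpr
      rw [Finset.mem_product, Finset.mem_singleton] at hmem
      obtain ⟨rfl, -⟩ := hmem
      have hP : IsSetPartition P := mem_bellF.1 (Finset.mem_filter.1 hQ).1
      exact mem_bellF.2 (isSetPartition_ext1 hP o)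
    · rintro ⟨P, o⟩ hpr ⟨Q, o'⟩ hpr' h
      simp only [hD, Finset.coe_biUnion, Set.mem_iUnion, Finset.mem_coe] at hpr hpr'
      obtain ⟨P', hP', hmem⟩ := hpr
      obtain ⟨Q', hQ', hmem'⟩ := hpr'
      rw [Finset.mem_product, Finset.mem_singleton] at hmem hmem'
      obtain ⟨rfl, hoP⟩ := hmem
      obtain ⟨rfl, hoQ⟩ := hmem'
      have hP : IsSetPartition P := mem_bellF.1 (Finset.mem_filter.1 hP').1
      have hQ : IsSetPartition Q := mem_bellF.1 (Finset.mem_filter.1 hQ').1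
      simp only at h
      have hPQ : P = Q := by
        rw [← restrict_ext1 hP o, ← restrict_ext1 hQ o', h]
      subst hPQ
      have ho : o = none ∨ ∃ x ∈ minset P, o = some x := by
        rw [Finset.mem_insert] at hoP
        rcases hoP with h0 | h0
        · exact Or.inl h0
        · obtain ⟨x, hx, hxo⟩ := Finset.mem_image.1 h0
          exact Or.inr ⟨x, hx, hxo.symm⟩
      have ho' : o' = none ∨ ∃ x ∈ minset P, o' = some x := by
        rw [Finset.mem_insert] at hoQ
        rcases hoQ with h0 | h0
        · exact Or.inl h0
        · obtain ⟨x, hx, hxo⟩ := Finset.mem_image.1 h0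
          exact Or.inr ⟨x, hx, hxo.symm⟩
      have := ext1_inj_o hP ho ho' h
      rw [this]
  exact le_trans hcardD hinj

end LemmaA2

/-- Key numeric inequality: for `m ≥ 2` and `ℓ ≥ 2*m^2+1`, `(m+1) * bell ℓ ≤ 2 * bell (ℓ+1)`. -/
lemma key_ineq {m ℓ : ℕ} (hm : 2 ≤ m) (hl : 2 * m ^ 2 + 1 ≤ ℓ) :
    (m + 1) * bell ℓ ≤ 2 * bell (ℓ + 1) := by
  classical
  have hbl : 2 * m ^ ℓ ≤ bell ℓ := by
    have h1 : (m ^ 2) ^ (ℓ - m ^ 2) ≤ bell ℓ :=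
      pow_le_bell (by nlinarith) (by nlinarith)
    have h2 : m ^ (ℓ + 1) ≤ (m ^ 2) ^ (ℓ - m ^ 2) := by
      rw [← pow_mul]
      exact Nat.pow_le_pow_right (by omega) (by omega)
    have h3 : 2 * m ^ ℓ ≤ m ^ (ℓ + 1) := by
      rw [pow_succ, mul_comm (m ^ ℓ) m]
      exact Nat.mul_le_mul_right _ hm
    omega
  set Big := ((bellF ℓ).filter (fun P => m ≤ P.card)).card with hBig
  have hsplit : Big + ((bellF ℓ).filter (fun P => ¬ m ≤ P.card)).card = bell ℓ := by
    rw [bell_eq, hBig]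
    exact Finset.card_filter_add_card_filter_not _
  have hfew : ((bellF ℓ).filter (fun P => ¬ m ≤ P.card)).card ≤ m ^ ℓ := by
    have : (bellF ℓ).filter (fun P => ¬ m ≤ P.card)
        = (bellF ℓ).filter (fun P => P.card < m) := by
      apply Finset.filter_congr
      intro P _
      exact Nat.not_le
    rw [this]
    exact card_few_blocks (by omega)
  have hA : (m + 1) * Big ≤ bell (ℓ + 1) := by
    rw [bell_eq]
    exact lemmaA ℓ m
  have h2Big : bell ℓ ≤ 2 * Big := by omega
  calc (m + 1) * bell ℓ ≤ (m + 1) * (2 * Big) := Nat.mul_le_mul_left _ h2Big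
    _ = 2 * ((m + 1) * Big) := by ring
    _ ≤ 2 * bell (ℓ + 1) := Nat.mul_le_mul_left _ hA

theorem bell_ratio_tendsto_atTop :
    ∀ c : ℝ, 0 < c → ∃ N : ℕ, ∀ n ≥ N, (bell n : ℝ) > c * (bell (n - 1) : ℝ) := by
  intro c hc
  set m : ℕ := 2 * ⌈c⌉₊ + 2 with hm
  refine ⟨2 * m ^ 2 + 2, ?_⟩
  intro n hn
  obtain ⟨ℓ, rfl⟩ : ∃ ℓ, n = ℓ + 1 := ⟨n - 1, by omega⟩
  have hl : 2 * m ^ 2 + 1 ≤ ℓ := by omega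
  have hkey := key_ineq (m := m) (by omega) hl
  have hbl : 2 * m ^ ℓ ≤ bell ℓ := by
    have h1 : (m ^ 2) ^ (ℓ - m ^ 2) ≤ bell ℓ :=
      pow_le_bell (by nlinarith) (by nlinarith)
    have h2 : m ^ (ℓ + 1) ≤ (m ^ 2) ^ (ℓ - m ^ 2) := by
      rw [← pow_mul]
      exact Nat.pow_le_pow_right (by omega) (by omega)
    have h3 : 2 * m ^ ℓ ≤ m ^ (ℓ + 1) := by
      rw [pow_succ, mul_comm (m ^ ℓ) m]
      exact Nat.mul_le_mul_right _ (by omega)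
    omega
  have hblpos : 0 < bell ℓ := by
    have : 0 < m ^ ℓ := pow_pos (by omega) _
    omega
  have hsimp : (ℓ + 1) - 1 = ℓ := by omega
  rw [hsimp]
  -- cast to ℝ
  have hkeyR : ((m : ℝ) + 1) * (bell ℓ : ℝ) ≤ 2 * (bell (ℓ + 1) : ℝ) := by
    exact_mod_cast hkey
  have hblposR : (0 : ℝ) < (bell ℓ : ℝ) := by exact_mod_cast hblpos
  have hcm : 2 * c < (m : ℝ) + 1 := by
    have h1 : c ≤ (⌈c⌉₊ : ℝ) := Nat.le_ceil c
    have h2 : ((m : ℝ)) = 2 * (⌈c⌉₊ : ℝ) + 2 := by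
      rw [hm]; push_cast; ring
    nlinarith
  nlinarith
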